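/- Let d be a positive integer, let p ≥ 1, ι > 0, C > 0, and ρ > 0 be reals, and let P be a Borel probability measure on ℝ^d × ℝ whose first marginal (the law of the covariate x) is atomless and satisfies ∫ ‖x‖^p dP(x, y) < ∞. Let ℓ : ℝ × ℝ → [0, ∞) be measurable and such that for every y ∈ ℝ, ℓ(y, z)/|z|^{p+ι} → C as |z| → ∞. Fix w ∈ ℝ^d with w ≠ 0. Then for every M ∈ ℝ there exists a Borel measurable map τ : ℝ^d → ℝ^d such that ∫ ‖x − τ(x)‖^p dP(x, y) ≤ ρ^p and ∫ ℓ(y, ⟨w, τ(x)⟩) dP(x, y) ≥ M. (Consequently, the worst-case expected loss over all label-preserving transports of P with p-th transport cost at most ρ^p is +∞; this is the content of the paper's fact that any loss with super-p growth has infinite worst-case Wasserstein-p DRO risk.) -/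

import Mathlib

open MeasureTheory Filter Topology
open scoped InnerProductSpace ENNReal

open Set Metric in
/-- An atomless finite measure on a separable metric space admits a countable cover of the
whole space by measurable sets of measure at most `ε`. -/
private lemma exists_small_cover {X : Type*} [MetricSpace X] [Nonempty X]
    [TopologicalSpace.SeparableSpace X] [MeasurableSpace X] [OpensMeasurableSpace X]
    (μ : Measure X) [IsFiniteMeasure μ] [NullSingletonClass μ] {ε : ℝ} (hε : 0 < ε) :
    ∃ e : ℕ → Set X, (∀ i, MeasurableSet (e i)) ∧ (∀ i, μ (e i) ≤ ENNReal.ofReal ε) ∧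
      (⋃ i, e i) = univ := by
  classical
  set q : ℕ → X := TopologicalSpace.denseSeq X with hq
  set g : ℕ × ℕ → Set X := fun ik =>
    if μ (ball (q ik.1) (1 / (ik.2 + 1))) ≤ ENNReal.ofReal ε
    then ball (q ik.1) (1 / (ik.2 + 1)) else ∅ with hg
  have hgm : ∀ ik, MeasurableSet (g ik) := by
    intro ik
    by_cases h : μ (ball (q ik.1) (1 / (ik.2 + 1))) ≤ ENNReal.ofReal ε
    · simp only [hg, if_pos h]; exact measurableSet_ball
    · simp only [hg, if_neg h]; exact MeasurableSet.empty
  have hgs : ∀ ik, μ (g ik) ≤ ENNReal.ofReal ε := by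
    intro ik
    by_cases h : μ (ball (q ik.1) (1 / (ik.2 + 1))) ≤ ENNReal.ofReal ε
    · simpa only [hg, if_pos h] using h
    · simp only [hg, if_neg h]; simp
  -- small closed balls around every point
  have hsmallball : ∀ x : X, ∃ k : ℕ, μ (closedBall x (2 / (k + 1))) < ENNReal.ofReal ε := by
    intro x
    set s : ℕ → Set X := fun n => closedBall x (2 / (n + 1)) with hs
    have hanti : Antitone s := by
      intro m n hmn
      apply closedBall_subset_closedBall
      apply div_le_div_of_nonneg_left (by norm_num) (by positivity)
      exact_mod_cast by exact_mod_cast add_le_add_left (Nat.cast_le.2 hmn) 1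
    have hinter : (⋂ n, s n) = {x} := by
      apply Subset.antisymm
      · intro y hy
        simp only [mem_iInter, hs, mem_closedBall] at hy
        have hd : dist y x ≤ 0 := by
          by_contra hcon
          push_neg at hcon
          obtain ⟨n, hn⟩ := exists_nat_gt (2 / dist y x)
          have hn0 : (0:ℝ) < n + 1 := by positivity
          have : 2 / ((n:ℝ) + 1) < dist y x := by
            rw [div_lt_iff₀ hn0]
            have h2 : 2 / dist y x < (n:ℝ) + 1 := by linarith
            calc (2:ℝ) = (2 / dist y x) * dist y x := by field_simp
            _ < ((n:ℝ) + 1) * dist y x := by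
                apply mul_lt_mul_of_pos_right h2 hcon
            _ = dist y x * ((n:ℝ)+1) := by ring
          exact absurd (hy n) (not_le.2 this)
        have hyx : y = x := by rw [← dist_eq_zero]; exact le_antisymm hd dist_nonneg
        simp [hyx]
      · intro y hy
        simp only [mem_singleton_iff] at hy
        subst hy
        simp only [mem_iInter, hs, mem_closedBall, dist_self]
        intro n; positivity
    have htend : Tendsto (μ ∘ s) atTop (𝓝 0) := by
      have := tendsto_measure_iInter_atTop (μ := μ) (s := s)
        (fun n => measurableSet_closedBall.nullMeasurableSet) hanti
        ⟨0, measure_ne_top μ _⟩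
      rwa [hinter, measure_singleton] at this
    have := htend.eventually_lt_const (ENNReal.ofReal_pos.2 hε)
    exact this.exists
  refine ⟨fun n => g ((Denumerable.eqv (ℕ × ℕ)).symm n), fun n => hgm _, fun n => hgs _, ?_⟩
  have hsurj : Function.Surjective fun n => ((Denumerable.eqv (ℕ × ℕ)).symm n) :=
    (Denumerable.eqv (ℕ × ℕ)).symm.surjective
  rw [hsurj.iUnion_comp (fun ik => g ik)]
  apply Subset.antisymm (subset_univ _)
  intro x _
  obtain ⟨k, hk⟩ := hsmallball x
  have hrk : (0:ℝ) < 1 / (k + 1) := by positivity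
  obtain ⟨i, hi⟩ := (TopologicalSpace.denseRange_denseSeq X).exists_dist_lt x hrk
  have hsub : ball (q i) (1 / (k + 1)) ⊆ closedBall x (2 / (k + 1)) := by
    intro y hy
    simp only [mem_ball] at hy
    simp only [mem_closedBall]
    have := dist_triangle y (q i) x
    have h1 : dist (q i) x < 1 / (k + 1) := by
      rw [dist_comm]; exact hi
    have : dist y x < 1 / (k + 1) + 1 / (k + 1) := by
      calc dist y x ≤ dist y (q i) + dist (q i) x := dist_triangle _ _ _
      _ < 1 / (k + 1) + 1 / (k + 1) := by apply add_lt_add hy h1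
    calc dist y x ≤ 1 / (k + 1) + 1 / (k + 1) := le_of_lt this
    _ = 2 / (k + 1) := by ring
  have hcond : μ (ball (q i) (1 / ((k:ℝ) + 1))) ≤ ENNReal.ofReal ε :=
    le_of_lt (lt_of_le_of_lt (measure_mono hsub) hk)
  refine mem_iUnion.2 ⟨(i, k), ?_⟩
  simp only [hg, if_pos hcond]
  exact mem_ball.2 hi

/-- If every measurable set of `μ`-measure at most `ε` has `ν`-measure at most `c`, and the
space is covered by countably many sets of `μ`-measure at most `ε / 2`, then
`ν univ ≤ (J + 1) * c` whenever `J * (ε / 2) ≥ 1`. -/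
private lemma measure_univ_le_of_small_sets {α : Type*} [MeasurableSpace α]
    (μ ν : Measure α) [IsProbabilityMeasure μ]
    (e : ℕ → Set α) (hme : ∀ i, MeasurableSet (e i)) (hcover : (⋃ i, e i) = Set.univ)
    {ε : ℝ} (hsmall : ∀ i, μ (e i) ≤ ENNReal.ofReal (ε / 2))
    (c : ℝ≥0∞) (J : ℕ) (hJ : (1 : ℝ≥0∞) ≤ J * ENNReal.ofReal (ε / 2))
    (hc : ∀ A, MeasurableSet A → μ A ≤ ENNReal.ofReal ε → ν A ≤ c) :
    ν Set.univ ≤ (J + 1) * c := by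
  classical
  set δ : ℝ≥0∞ := ENNReal.ofReal (ε / 2) with hδ
  have hδε : δ + δ ≤ ENNReal.ofReal ε := by
    rcases le_or_gt ε 0 with h | h
    · have : δ = 0 := by rw [hδ, ENNReal.ofReal_eq_zero]; linarith
      simp [this]
    · rw [hδ, ← ENNReal.ofReal_add (by linarith) (by linarith)]
      apply ENNReal.ofReal_le_ofReal; linarith
  set U : ℕ → Set α := fun m => ⋃ i ∈ Finset.range m, e i with hU
  have hUm : ∀ m, MeasurableSet (U m) := fun m =>
    (Finset.range m).measurableSet_biUnion (fun i _ => hme i)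
  have hmono : Monotone U := by
    intro m m' h x hx
    simp only [hU, Set.mem_iUnion, Finset.mem_range] at hx ⊢
    obtain ⟨i, hi, hx⟩ := hx
    exact ⟨i, lt_of_lt_of_le hi h, hx⟩
  have hU0 : U 0 = ∅ := by simp [hU]
  have hstep : ∀ m, μ (U (m + 1)) ≤ μ (U m) + δ := by
    intro m
    have : U (m + 1) = U m ∪ e m := by
      simp only [hU, Finset.range_add_one, Finset.mem_insert]
      ext x; simp only [Set.mem_iUnion, Set.mem_union]
      constructor
      · rintro ⟨i, hi | hi, hx⟩
        · exact Or.inr (hi ▸ hx)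
        · exact Or.inl ⟨i, hi, hx⟩
      · rintro (⟨i, hi, hx⟩ | hx)
        · exact ⟨i, Or.inr hi, hx⟩
        · exact ⟨m, Or.inl rfl, hx⟩
    rw [this]
    calc μ (U m ∪ e m) ≤ μ (U m) + μ (e m) := measure_union_le _ _
    _ ≤ μ (U m) + δ := add_le_add_right (hsmall m) _
  have key : ∀ j m : ℕ, μ (U m) ≤ j * δ → ν (U m) ≤ (j + 1) * c := by
    intro j
    induction j with
    | zero =>
      intro m hm
      have : ν (U m) ≤ c := hc (U m) (hUm m) (by simp at hm; simp [hm])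
      simpa using this
    | succ j ih =>
      intro m hm
      set Pr : ℕ → Prop := fun i => μ (U i) ≤ j * δ with hPr
      have hP0 : Pr 0 := by simp [hPr, hU0]
      set m' := Nat.findGreatest Pr m with hm'
      have hm'le : m' ≤ m := Nat.findGreatest_le m
      have hPm' : Pr m' := Nat.findGreatest_spec (Nat.zero_le m) hP0
      rcases eq_or_lt_of_le hm'le with h | h
      · have := ih m (h ▸ hPm')
        calc ν (U m) ≤ ((j : ℝ≥0∞) + 1) * c := this
        _ ≤ ((j : ℝ≥0∞) + 1 + 1) * c := by
            apply mul_le_mul_left (by simp [le_add_iff_nonneg_right])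
        _ = (((j + 1 : ℕ) : ℝ≥0∞) + 1) * c := by push_cast; ring
      · have hnot : ¬ Pr (m' + 1) :=
          Nat.findGreatest_is_greatest (Nat.lt_succ_self m') h
        have h1 : (j : ℝ≥0∞) * δ < μ (U (m' + 1)) := lt_of_not_ge hnot
        have hsum : μ (U m \ U m') + μ (U m') = μ (U m) := by
          rw [← measure_union Set.disjoint_sdiff_left (hUm m'),
            Set.diff_union_of_subset (hmono hm'le)]
        have hUm'fin : μ (U m') ≠ ⊤ := measure_ne_top μ _
        have hdiff : μ (U m \ U m') ≤ ENNReal.ofReal ε := by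
          have hchain : μ (U m) ≤ ENNReal.ofReal ε + μ (U m') := by
            calc μ (U m) ≤ ((j : ℝ≥0∞) + 1) * δ := by
                  have : ((j + 1 : ℕ) : ℝ≥0∞) = (j : ℝ≥0∞) + 1 := by push_cast; ring
                  rwa [this] at hm
            _ = (j : ℝ≥0∞) * δ + δ := by ring
            _ ≤ μ (U (m' + 1)) + δ := add_le_add_left h1.le _
            _ ≤ (μ (U m') + δ) + δ := add_le_add_left (hstep m') _
            _ = (δ + δ) + μ (U m') := by ring
            _ ≤ ENNReal.ofReal ε + μ (U m') := add_le_add_left hδε _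
          rw [← hsum] at hchain
          exact (ENNReal.add_le_add_iff_right hUm'fin).1 hchain
        have hν1 : ν (U m) ≤ ν (U m') + ν (U m \ U m') := by
          have hsub : U m ⊆ U m \ U m' ∪ U m' := by
            rw [Set.diff_union_of_subset (hmono hm'le)]
          calc ν (U m) ≤ ν (U m \ U m' ∪ U m') := measure_mono hsub
          _ ≤ ν (U m \ U m') + ν (U m') := measure_union_le _ _
          _ = ν (U m') + ν (U m \ U m') := add_comm _ _
        have hν2 : ν (U m \ U m') ≤ c := hc _ ((hUm m).diff (hUm m')) hdiff
        have hν3 : ν (U m') ≤ ((j : ℝ≥0∞) + 1) * c := ih m' hPm'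
        calc ν (U m) ≤ ((j : ℝ≥0∞) + 1) * c + c := le_trans hν1 (add_le_add hν3 hν2)
        _ = ((j : ℝ≥0∞) + 1 + 1) * c := by ring
        _ = (((j + 1 : ℕ) : ℝ≥0∞) + 1) * c := by push_cast; ring
  have hall : ∀ m, ν (U m) ≤ (J + 1) * c := by
    intro m
    apply key J m
    calc μ (U m) ≤ 1 := prob_le_one
    _ ≤ J * δ := hJ
  have huniv : (⋃ m, U m) = Set.univ := by
    apply Set.Subset.antisymm (Set.subset_univ _)
    rw [← hcover]
    apply Set.iUnion_subset
    intro i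
    intro x hx
    exact Set.mem_iUnion.2 ⟨i + 1, Set.mem_iUnion₂.2 ⟨i, Finset.mem_range.2 (Nat.lt_succ_self i), hx⟩⟩
  have hdir : Directed (· ⊆ ·) U := hmono.directed_le
  calc ν Set.univ = ν (⋃ m, U m) := by rw [huniv]
  _ = ⨆ m, ν (U m) := hdir.measure_iUnion
  _ ≤ (J + 1) * c := iSup_le hall

/-- **Super-`p` growth implies infinite worst-case Wasserstein-`p` DRO risk.**
If the covariate marginal of `P` is atomless with finite `p`-th moment, the
nonnegative loss `ℓ(y, z)` grows like `C|z|^{p+ι}` as `|z| → ∞`, and `w ≠ 0`,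
then for every `M` there is a measurable label-preserving transport map `τ`
of `p`-th cost at most `ρ^p` under which the expected loss is at least `M`. -/
theorem wasserstein_dro_superlinear_growth_unbounded
    (d : ℕ) (hd : 0 < d) (p ι C ρ : ℝ) (hp : 1 ≤ p) (hι : 0 < ι) (hC : 0 < C) (hρ : 0 < ρ)
    (P : Measure (EuclideanSpace ℝ (Fin d) × ℝ)) [IsProbabilityMeasure P]
    (hatomless : NoAtoms (P.map Prod.fst))
    (hmom : (∫⁻ ξ, ENNReal.ofReal (‖ξ.1‖ ^ p) ∂P) < ⊤)
    (ℓ : ℝ → ℝ → ℝ)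
    (hmeas : Measurable fun q : ℝ × ℝ => ℓ q.1 q.2)
    (hnonneg : ∀ y z, 0 ≤ ℓ y z)
    (hlim : ∀ y : ℝ,
      Tendsto (fun z : ℝ => ℓ y z / |z| ^ (p + ι)) (cocompact ℝ) (nhds C))
    (w : EuclideanSpace ℝ (Fin d)) (hw : w ≠ 0) :
    ∀ M : ℝ, ∃ τ : EuclideanSpace ℝ (Fin d) → EuclideanSpace ℝ (Fin d),
      Measurable τ ∧
      (∫⁻ ξ, ENNReal.ofReal (‖ξ.1 - τ ξ.1‖ ^ p) ∂P) ≤ ENNReal.ofReal (ρ ^ p) ∧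
      ENNReal.ofReal M ≤ ∫⁻ ξ, ENNReal.ofReal (ℓ ξ.2 ⟪w, τ ξ.1⟫_ℝ) ∂P := by
  intro M
  classical
  set μ : Measure (EuclideanSpace ℝ (Fin d)) := P.map Prod.fst with hμdef
  haveI hμprob : IsProbabilityMeasure μ := Measure.isProbabilityMeasure_map measurable_fst.aemeasurable
  haveI : NullSingletonClass μ := hatomless
  have hb0 : (0:ℝ) < ‖w‖ := norm_pos_iff.2 hw
  set b : ℝ := ‖w‖ with hbdef
  set u : EuclideanSpace ℝ (Fin d) := ‖w‖⁻¹ • w with hudef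
  have hu1 : ‖u‖ = 1 := by
    rw [hudef, norm_smul, norm_inv, norm_norm, inv_mul_cancel₀ (ne_of_gt hb0)]
  have hwu : ⟪w, u⟫_ℝ = b := by
    rw [hudef, real_inner_smul_right, real_inner_self_eq_norm_mul_norm]
    rw [hbdef]; field_simp
  set M₀ : ℝ := max M 1 with hM₀def
  have hM₀pos : (0:ℝ) < M₀ := lt_of_lt_of_le one_pos (le_max_right _ _)
  have hMM₀ : M ≤ M₀ := le_max_left _ _
  have hppos : (0:ℝ) < p := lt_of_lt_of_le one_pos hp
  have hρp : (0:ℝ) < ρ ^ p := Real.rpow_pos_of_pos hρ _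
  set f : ℕ → (EuclideanSpace ℝ (Fin d) × ℝ) → ℝ≥0∞ :=
    fun n ξ => ENNReal.ofReal (ℓ ξ.2 (⟪w, ξ.1⟫_ℝ + n * b)) with hfdef
  have hinner : Measurable fun ξ : EuclideanSpace ℝ (Fin d) × ℝ => ⟪w, ξ.1⟫_ℝ :=
    (continuous_const.inner continuous_fst).measurable
  have hfm : ∀ n, Measurable (f n) := by
    intro n
    apply ENNReal.measurable_ofReal.comp
    exact hmeas.comp (measurable_snd.prodMk (hinner.add_const _))
  -- pointwise blow-up of the normalized shifted loss
  have hblow : ∀ ξ : EuclideanSpace ℝ (Fin d) × ℝ,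
      Tendsto (fun n : ℕ => ℓ ξ.2 (⟪w, ξ.1⟫_ℝ + n * b) / (n : ℝ) ^ p) atTop atTop := by
    intro ξ
    set a : ℝ := ⟪w, ξ.1⟫_ℝ with hadef
    have hz : Tendsto (fun n : ℕ => a + n * b) atTop atTop :=
      tendsto_atTop_add_const_left _ a (tendsto_natCast_atTop_atTop.atTop_mul_const hb0)
    have hzc : Tendsto (fun n : ℕ => a + n * b) atTop (cocompact ℝ) :=
      hz.mono_right (by rw [cocompact_eq_atBot_atTop]; exact le_sup_right)
    have h2 : Tendsto (fun n : ℕ => ℓ ξ.2 (a + n * b) / |a + n * b| ^ (p + ι)) atTop (𝓝 C) :=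
      (hlim ξ.2).comp hzc
    have hev1 : ∀ᶠ n : ℕ in atTop, (n : ℝ) * (b / 2) ≤ a + n * b := by
      have h := tendsto_atTop_add_const_left _ a
        (tendsto_natCast_atTop_atTop.atTop_mul_const (half_pos hb0))
      filter_upwards [h.eventually_ge_atTop 0] with n hn
      nlinarith [hn]
    have hev2 : ∀ᶠ n : ℕ in atTop, (1:ℝ) ≤ (n:ℝ) := by
      filter_upwards [eventually_ge_atTop 1] with n hn
      exact_mod_cast hn
    have h3 : Tendsto (fun n : ℕ => |a + n * b| ^ (p + ι) / (n : ℝ) ^ p) atTop atTop := by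
      have hc0 : (0:ℝ) < (b / 2) ^ (p + ι) := Real.rpow_pos_of_pos (half_pos hb0) _
      have htail : Tendsto (fun n : ℕ => (b / 2) ^ (p + ι) * (n : ℝ) ^ ι) atTop atTop :=
        Tendsto.const_mul_atTop hc0 ((tendsto_rpow_atTop hι).comp tendsto_natCast_atTop_atTop)
      apply tendsto_atTop_mono' atTop _ htail
      filter_upwards [hev1, hev2] with n hn2 hn1
      have hn0 : (0:ℝ) < (n:ℝ) := lt_of_lt_of_le one_pos hn1
      have hzpos : (0:ℝ) < a + n * b := lt_of_lt_of_le (by positivity) hn2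
      have habs : (n:ℝ) * (b/2) ≤ |a + n * b| := le_trans hn2 (le_abs_self _)
      have hnp : (0:ℝ) < (n:ℝ) ^ p := Real.rpow_pos_of_pos hn0 _
      rw [le_div_iff₀ hnp]
      have hkey : ((n:ℝ) * (b/2)) ^ (p + ι) ≤ |a + n * b| ^ (p + ι) :=
        Real.rpow_le_rpow (by positivity) habs (by linarith)
      calc (b / 2) ^ (p + ι) * (n:ℝ) ^ ι * (n:ℝ) ^ p
          = ((n:ℝ) ^ p * (n:ℝ) ^ ι) * (b/2) ^ (p + ι) := by ring
        _ = (n:ℝ) ^ (p + ι) * (b/2) ^ (p + ι) := by rw [← Real.rpow_add hn0]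
        _ = ((n:ℝ) * (b/2)) ^ (p + ι) := (Real.mul_rpow (by positivity) (by positivity)).symm
        _ ≤ |a + n * b| ^ (p + ι) := hkey
    have h4 := Tendsto.pos_mul_atTop hC h2 h3
    apply h4.congr'
    filter_upwards [hev1, hev2] with n hn2 hn1
    have hn0 : (0:ℝ) < (n:ℝ) := lt_of_lt_of_le one_pos hn1
    have hzpos : (0:ℝ) < a + n * b := lt_of_lt_of_le (by positivity) hn2
    have habs : |a + n * b| ^ (p + ι) ≠ 0 :=
      ne_of_gt (Real.rpow_pos_of_pos (abs_pos.2 (ne_of_gt hzpos)) _)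
    have hnp : (n:ℝ) ^ p ≠ 0 := ne_of_gt (Real.rpow_pos_of_pos hn0 _)
    field_simp
  -- normalized sequence in ℝ≥0∞ and Fatou
  set G : ℕ → (EuclideanSpace ℝ (Fin d) × ℝ) → ℝ≥0∞ :=
    fun n ξ => f n ξ * (ENNReal.ofReal ((n : ℝ) ^ p))⁻¹ with hGdef
  have hGm : ∀ n, Measurable (G n) := fun n => (hfm n).mul_const _
  have hGtop : ∀ ξ, Tendsto (fun n => G n ξ) atTop (𝓝 ⊤) := by
    intro ξ
    have hequ : (fun n : ℕ => ENNReal.ofReal (ℓ ξ.2 (⟪w, ξ.1⟫_ℝ + n * b) / (n:ℝ) ^ p))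
        =ᶠ[atTop] fun n => G n ξ := by
      filter_upwards [eventually_ge_atTop 1] with n hn
      have hn0 : (0:ℝ) < (n:ℝ) := by exact_mod_cast hn
      have hnp : (0:ℝ) < (n:ℝ) ^ p := Real.rpow_pos_of_pos hn0 _
      rw [ENNReal.ofReal_div_of_pos hnp, div_eq_mul_inv]
    exact (ENNReal.tendsto_ofReal_atTop.comp (hblow ξ)).congr' hequ
  have hfatou : liminf (fun n => ∫⁻ ξ, G n ξ ∂P) atTop = ⊤ := by
    apply top_le_iff.1
    calc (⊤:ℝ≥0∞) = ∫⁻ ξ, liminf (fun n => G n ξ) atTop ∂P := by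
          have hl : ∀ ξ, liminf (fun n => G n ξ) atTop = (⊤:ℝ≥0∞) := fun ξ => (hGtop ξ).liminf_eq
          simp [hl, lintegral_const]
      _ ≤ liminf (fun n => ∫⁻ ξ, G n ξ ∂P) atTop := lintegral_liminf_le hGm
  set L' : ℝ≥0∞ := ENNReal.ofReal ((2 / ρ ^ p + 2) * M₀) with hL'def
  have hev : ∀ᶠ n : ℕ in atTop, L' < ∫⁻ ξ, G n ξ ∂P :=
    eventually_lt_of_lt_liminf (by rw [hfatou]; exact ENNReal.ofReal_lt_top)
  obtain ⟨n, hn1, hnL⟩ := ((eventually_ge_atTop 1).and hev).exists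
  have hn0 : (0:ℝ) < (n:ℝ) := by exact_mod_cast hn1
  have hn1' : (1:ℝ) ≤ (n:ℝ) := by exact_mod_cast hn1
  have hnp : (0:ℝ) < (n:ℝ) ^ p := Real.rpow_pos_of_pos hn0 _
  have hnp1 : (1:ℝ) ≤ (n:ℝ) ^ p := Real.one_le_rpow hn1' (by linarith)
  set bN : ℝ≥0∞ := ENNReal.ofReal ((n:ℝ) ^ p) with hbNdef
  have hbN0 : bN ≠ 0 := by
    rw [hbNdef, Ne, ENNReal.ofReal_eq_zero, not_le]; exact hnp
  have hbNtop : bN ≠ ⊤ := ENNReal.ofReal_ne_top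
  have hGint : ∫⁻ ξ, G n ξ ∂P = (∫⁻ ξ, f n ξ ∂P) * bN⁻¹ := lintegral_mul_const _ (hfm n)
  have hIbig : L' * bN < ∫⁻ ξ, f n ξ ∂P := by
    have h1 : L' * bN < (∫⁻ ξ, G n ξ ∂P) * bN :=
      ENNReal.mul_lt_mul_left hbN0 hbNtop hnL
    have h2 : (∫⁻ ξ, G n ξ ∂P) * bN = ∫⁻ ξ, f n ξ ∂P := by
      rw [hGint, mul_assoc, ENNReal.inv_mul_cancel hbN0 hbNtop, mul_one]
    rwa [h2] at h1
  set ν : Measure (EuclideanSpace ℝ (Fin d)) := (P.withDensity (f n)).map Prod.fst with hνdef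
  have hνA : ∀ A : Set (EuclideanSpace ℝ (Fin d)), MeasurableSet A →
      ν A = ∫⁻ ξ in Prod.fst ⁻¹' A, f n ξ ∂P := by
    intro A hA
    rw [hνdef, Measure.map_apply measurable_fst hA, withDensity_apply _ (measurable_fst hA)]
  have hνuniv : ν Set.univ = ∫⁻ ξ, f n ξ ∂P := by
    rw [hνA _ MeasurableSet.univ]; simp
  set εn : ℝ := ρ ^ p / (n:ℝ) ^ p with hεndef
  have hεn : 0 < εn := div_pos hρp hnp
  set J : ℕ := ⌈2 / εn⌉₊ with hJdef
  have hJ1 : (1:ℝ≥0∞) ≤ J * ENNReal.ofReal (εn / 2) := by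
    have h2ε : (2:ℝ)/εn ≤ J := Nat.le_ceil _
    have hr : (1:ℝ) ≤ (J:ℝ) * (εn/2) := by
      calc (1:ℝ) = (2/εn) * (εn/2) := by field_simp
        _ ≤ (J:ℝ) * (εn/2) := mul_le_mul_of_nonneg_right h2ε (by positivity)
    calc (1:ℝ≥0∞) = ENNReal.ofReal 1 := by simp
      _ ≤ ENNReal.ofReal ((J:ℝ) * (εn/2)) := ENNReal.ofReal_le_ofReal hr
      _ = ENNReal.ofReal (J:ℝ) * ENNReal.ofReal (εn/2) := ENNReal.ofReal_mul (by positivity)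
      _ = (J:ℝ≥0∞) * ENNReal.ofReal (εn/2) := by rw [ENNReal.ofReal_natCast]
  have hbig : ((J:ℝ≥0∞) + 1) * ENNReal.ofReal M₀ < ν Set.univ := by
    have hJub : (J:ℝ) < 2/εn + 1 := Nat.ceil_lt_add_one (by positivity)
    have h2εn : 2/εn = 2 * (n:ℝ)^p / ρ^p := by
      rw [hεndef]; field_simp
    have hkey : (J:ℝ) + 1 ≤ (2/ρ^p + 2) * (n:ℝ)^p := by
      have : (2:ℝ)/εn + 2 ≤ (2/ρ^p + 2) * (n:ℝ)^p := by
        rw [h2εn]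
        have h1 : (2:ℝ) ≤ 2 * (n:ℝ)^p := by linarith
        have h2 : (2:ℝ) * (n:ℝ)^p / ρ^p = (2/ρ^p) * (n:ℝ)^p := by field_simp
        rw [h2]; nlinarith
      linarith
    have hr : ((J:ℝ) + 1) * M₀ ≤ (2/ρ^p + 2) * M₀ * (n:ℝ)^p := by
      calc ((J:ℝ) + 1) * M₀ ≤ ((2/ρ^p + 2) * (n:ℝ)^p) * M₀ :=
            mul_le_mul_of_nonneg_right hkey (le_of_lt hM₀pos)
        _ = (2/ρ^p + 2) * M₀ * (n:ℝ)^p := by ring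
    calc ((J:ℝ≥0∞) + 1) * ENNReal.ofReal M₀
        = ENNReal.ofReal (((J:ℝ) + 1) * M₀) := by
          rw [ENNReal.ofReal_mul (by positivity), ENNReal.ofReal_add (by positivity) zero_le_one,
            ENNReal.ofReal_natCast, ENNReal.ofReal_one]
      _ ≤ ENNReal.ofReal ((2/ρ^p + 2) * M₀ * (n:ℝ)^p) := ENNReal.ofReal_le_ofReal hr
      _ = L' * bN := by
          rw [hL'def, hbNdef, ← ENNReal.ofReal_mul (by positivity)]
      _ < ∫⁻ ξ, f n ξ ∂P := hIbig
      _ = ν Set.univ := hνuniv.symm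
  obtain ⟨e, hme, hsmall, hcover⟩ := exists_small_cover μ (ε := εn/2) (by positivity)
  have hA : ∃ A : Set (EuclideanSpace ℝ (Fin d)), MeasurableSet A ∧
      μ A ≤ ENNReal.ofReal εn ∧ ENNReal.ofReal M₀ < ν A := by
    by_contra hcon
    push_neg at hcon
    exact absurd (measure_univ_le_of_small_sets μ ν e hme hcover hsmall
      (ENNReal.ofReal M₀) J hJ1 hcon) (not_le.2 hbig)
  obtain ⟨A, hAm, hAsmall, hAbig⟩ := hA
  set τ : EuclideanSpace ℝ (Fin d) → EuclideanSpace ℝ (Fin d) :=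
    fun x => if x ∈ A then x + (n:ℝ) • u else x with hτdef
  have hτm : Measurable τ := Measurable.ite hAm (measurable_id.add_const _) measurable_id
  have hτA : ∀ x ∈ A, τ x = x + (n:ℝ) • u := by
    intro x hx; rw [hτdef]; simp [hx]
  refine ⟨τ, hτm, ?_, ?_⟩
  · -- cost bound
    have hcost : ∀ ξ : EuclideanSpace ℝ (Fin d) × ℝ,
        ENNReal.ofReal (‖ξ.1 - τ ξ.1‖ ^ p)
          = (Prod.fst ⁻¹' A).indicator (fun _ => ENNReal.ofReal ((n:ℝ) ^ p)) ξ := by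
      intro ξ
      by_cases hx : ξ.1 ∈ A
      · have h2 : ‖ξ.1 - τ ξ.1‖ = (n:ℝ) := by
          rw [hτA _ hx]
          have : ξ.1 - (ξ.1 + (n:ℝ) • u) = -((n:ℝ) • u) := by abel
          rw [this, norm_neg, norm_smul, hu1, mul_one, Real.norm_natCast]
        rw [h2, Set.indicator_of_mem (Set.mem_preimage.2 hx)]
      · have h2 : τ ξ.1 = ξ.1 := by rw [hτdef]; simp [hx]
        rw [h2, sub_self, norm_zero, Real.zero_rpow (ne_of_gt hppos),
          Set.indicator_of_notMem (fun hc => hx (Set.mem_preimage.1 hc))]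
        simp
    calc ∫⁻ ξ, ENNReal.ofReal (‖ξ.1 - τ ξ.1‖ ^ p) ∂P
        = ∫⁻ ξ, (Prod.fst ⁻¹' A).indicator (fun _ => ENNReal.ofReal ((n:ℝ) ^ p)) ξ ∂P :=
          lintegral_congr hcost
      _ = ENNReal.ofReal ((n:ℝ) ^ p) * P (Prod.fst ⁻¹' A) := by
          rw [lintegral_indicator_const (measurable_fst hAm)]
      _ = ENNReal.ofReal ((n:ℝ) ^ p) * μ A := by
          rw [hμdef, Measure.map_apply measurable_fst hAm]
      _ ≤ ENNReal.ofReal ((n:ℝ) ^ p) * ENNReal.ofReal εn := mul_le_mul_right hAsmall _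
      _ = ENNReal.ofReal ((n:ℝ) ^ p * εn) := (ENNReal.ofReal_mul (le_of_lt hnp)).symm
      _ = ENNReal.ofReal (ρ ^ p) := by
          congr 1
          rw [hεndef]
          field_simp
  · -- loss bound
    calc ENNReal.ofReal M ≤ ENNReal.ofReal M₀ := ENNReal.ofReal_le_ofReal hMM₀
      _ ≤ ν A := le_of_lt hAbig
      _ = ∫⁻ ξ in Prod.fst ⁻¹' A, f n ξ ∂P := hνA A hAm
      _ = ∫⁻ ξ in Prod.fst ⁻¹' A, ENNReal.ofReal (ℓ ξ.2 ⟪w, τ ξ.1⟫_ℝ) ∂P := by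
          apply setLIntegral_congr_fun (measurable_fst hAm)
          intro ξ hξ
          have hx : ξ.1 ∈ A := Set.mem_preimage.1 hξ
          rw [hfdef]
          simp only
          rw [hτA _ hx, inner_add_right, real_inner_smul_right, hwu]
      _ ≤ ∫⁻ ξ, ENNReal.ofReal (ℓ ξ.2 ⟪w, τ ξ.1⟫_ℝ) ∂P := setLIntegral_le_lintegral _ _
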